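/- Let n < q be natural numbers, X a normal space of covering dimension at most n, f : X → ℝ^p continuous (p ≥ q), and let Z ⊆ ℝ^{p−q} × {0} ⊆ ℝ^p be any subset of the coordinate subspace consisting of vectors whose last q coordinates vanish. Then for any continuous ε : X → ℝ_{>0} there exists a continuous g : X → ℝ^p with ‖f(x) − g(x)‖ < ε(x) for all x, and g(x) not in the closure of Z for all x; in fact g(x) can be taken outside ℝ^{p−q} × {0} for all x. -/

import Mathlib

open Metric MeasureTheory
set_option maxHeartbeats 1000000

section AUX

noncomputable def projQ (p q : ℕ) (h : q ≤ p) :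
    EuclideanSpace ℝ (Fin p) →ₗ[ℝ] EuclideanSpace ℝ (Fin q) where
  toFun v := WithLp.toLp 2 (fun j : Fin q => v ⟨p - q + j.1, by omega⟩)
  map_add' a b := by ext j; rfl
  map_smul' c a := by ext j; rfl

theorem projQ_surj (p q : ℕ) (h : q ≤ p) : Function.Surjective (projQ p q h) := by
  intro w
  refine ⟨WithLp.toLp 2 (fun i : Fin p => if h2 : p - q ≤ i.1 then w ⟨i.1 - (p - q), by omega⟩ else 0), ?_⟩
  ext j
  show (if h2 : _ then _ else _) = _
  rw [dif_pos (Nat.le_add_right _ _)]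
  exact congrArg (fun i => w i) (Fin.ext (by simp))

variable {p q : ℕ}

theorem avoid_lemma (π : EuclideanSpace ℝ (Fin p) →ₗ[ℝ] EuclideanSpace ℝ (Fin q))
    (hπ : Function.Surjective π) (c : EuclideanSpace ℝ (Fin p)) {r : ℝ} (hr : 0 < r)
    (P : Finset (EuclideanSpace ℝ (Fin q))) :
    ∃ x ∈ ball c r, ∀ T : Finset (EuclideanSpace ℝ (Fin q)), T ⊆ P → T.card < q →
      π x ∉ Submodule.span ℝ (T : Set (EuclideanSpace ℝ (Fin q))) := by
  classical
  set 𝔖 := P.powerset.filter (fun T => T.card < q) with h𝔖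
  set B : Set (EuclideanSpace ℝ (Fin p)) :=
    ⋃ T ∈ 𝔖, π ⁻¹' (Submodule.span ℝ (T : Set (EuclideanSpace ℝ (Fin q)))) with hB
  have hBnull : volume B = 0 := by
    refine (measure_biUnion_null_iff 𝔖.countable_toSet).2 fun T hT => ?_
    have hTcard : T.card < q := (Finset.mem_filter.1 hT).2
    have hspan : Submodule.span ℝ (T : Set (EuclideanSpace ℝ (Fin q))) ≠ ⊤ := by
      intro h
      have h1 := finrank_span_finset_le_card (R := ℝ) T
      rw [Set.finrank, h, finrank_top, finrank_euclideanSpace_fin] at h1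
      omega
    have hcomap : (Submodule.span ℝ (T : Set (EuclideanSpace ℝ (Fin q)))).comap π ≠ ⊤ := by
      intro h
      apply hspan
      have := Submodule.map_comap_eq_of_surjective hπ
        (Submodule.span ℝ (T : Set (EuclideanSpace ℝ (Fin q))))
      rw [h, Submodule.map_top, LinearMap.range_eq_top.2 hπ] at this
      exact this.symm
    have : (π ⁻¹' (Submodule.span ℝ (T : Set (EuclideanSpace ℝ (Fin q)))) : Set _) =
        ((Submodule.span ℝ (T : Set (EuclideanSpace ℝ (Fin q)))).comap π : Set _) := rfl
    rw [this]
    exact Measure.addHaar_submodule _ _ hcomap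
  have hball : ¬ ball c r ⊆ B := by
    intro h
    have h2 : volume (ball c r) ≤ volume B := measure_mono h
    rw [hBnull] at h2
    exact absurd (le_antisymm h2 zero_le) (measure_ball_pos volume c hr).ne'
  obtain ⟨x, hx, hxB⟩ := Set.not_subset.1 hball
  refine ⟨x, hx, fun T hTP hTc hmem => hxB ?_⟩
  exact Set.mem_biUnion (Finset.mem_filter.2 ⟨Finset.mem_powerset.2 hTP, hTc⟩) hmem

theorem exists_seq_rec {E : Type*} [Inhabited E] (Q : ℕ → (ℕ → E) → E → Prop)
    (hQ : ∀ m p₁ p₂ x, (∀ k, k < m → p₁ k = p₂ k) → Q m p₁ x → Q m p₂ x)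
    (H : ∀ m (prev : ℕ → E), ∃ x, Q m prev x) :
    ∃ v : ℕ → E, ∀ m, Q m v (v m) := by
  classical
  let h : ∀ m : ℕ, (∀ k, k < m → E) → E := fun m prev =>
    Classical.choose (H m fun k => if hk : k < m then prev k hk else default)
  let v : ℕ → E := fun m => Nat.strongRec h m
  refine ⟨v, fun m => ?_⟩
  have hv : v m = h m fun k _ => v k := Nat.strongRec_eq h m
  have spec := Classical.choose_spec (H m fun k => if hk : k < m then v k else default)
  rw [hv]
  refine hQ m _ _ _ (fun k hk => ?_) spec
  simp [hk]

theorem gp_seq (hq : 0 < q) (π : EuclideanSpace ℝ (Fin p) →ₗ[ℝ] EuclideanSpace ℝ (Fin q))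
    (hπ : Function.Surjective π) (c : ℕ → EuclideanSpace ℝ (Fin p)) (r : ℕ → ℝ)
    (hr : ∀ k, 0 < r k) :
    ∃ v : ℕ → EuclideanSpace ℝ (Fin p), (∀ k, v k ∈ ball (c k) (r k)) ∧
      ∀ s : Finset (EuclideanSpace ℝ (Fin q)),
        (s : Set (EuclideanSpace ℝ (Fin q))) ⊆ Set.range (fun k => π (v k)) → s.card ≤ q →
        LinearIndependent (ι := (s : Set (EuclideanSpace ℝ (Fin q)))) ℝ Subtype.val := by
  classical
  set E' := EuclideanSpace ℝ (Fin q)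
  obtain ⟨v, hv⟩ := exists_seq_rec
    (Q := fun m prev x => x ∈ ball (c m) (r m) ∧ ∀ T : Finset E',
      (T : Set E') ⊆ (fun k => π (prev k)) '' (Set.Iio m) → T.card < q →
      π x ∉ Submodule.span ℝ (T : Set E'))
    (hQ := by
      intro m p₁ p₂ x hagree ⟨hx1, hx2⟩
      refine ⟨hx1, fun T hT hTc => hx2 T ?_ hTc⟩
      refine hT.trans ?_
      rw [Set.image_congr (fun k hk => ?_)]
      exact congrArg π (hagree k hk).symm)
    (H := by
      intro m prev
      obtain ⟨x, hx, hx2⟩ := avoid_lemma π hπ (c m) (hr m)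
        ((Finset.range m).image fun k => π (prev k))
      refine ⟨x, hx, fun T hT hTc => hx2 T ?_ hTc⟩
      intro t ht
      obtain ⟨k, hk, hkt⟩ := hT ht
      exact Finset.mem_image.2 ⟨k, Finset.mem_range.2 hk, hkt⟩)
  refine ⟨v, fun k => (hv k).1, ?_⟩
  set w : ℕ → E' := fun k => π (v k) with hw
  -- invariant by induction
  have inv : ∀ m : ℕ, ∀ s : Finset E', (s : Set E') ⊆ w '' (Set.Iio m) → s.card ≤ q →
      LinearIndependent (ι := (s : Set E')) ℝ Subtype.val := by
    intro m
    induction m with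
    | zero =>
      intro s hs _
      have h0 : s = ∅ := Finset.coe_eq_empty.1 (by
        rw [show Set.Iio (0:ℕ) = ∅ from by ext k; simp, Set.image_empty,
          Set.subset_empty_iff] at hs
        exact hs)
      subst h0
      haveI : IsEmpty ((((∅ : Finset E') : Set E')) : Type) := by
        simp
      exact linearIndependent_empty_type
    | succ m ih =>
      intro s hs hsc
      have hIio : Set.Iio (m + 1) = insert m (Set.Iio m) := by
        ext k
        simp only [Set.mem_Iio, Set.mem_insert_iff]
        omega
      rw [hIio, Set.image_insert_eq] at hs
      by_cases hwm : w m ∈ w '' (Set.Iio m)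
      · rw [Set.insert_eq_self.2 hwm] at hs
        exact ih s hs hsc
      by_cases hws : w m ∈ s
      · -- the interesting case
        set s' := s.erase (w m) with hs'
        have hs'sub : (s' : Set E') ⊆ w '' (Set.Iio m) := by
          intro t ht
          rw [hs', Finset.coe_erase] at ht
          rcases hs ht.1 with h | h
          · exact absurd h ht.2
          · exact h
        have hcard : s'.card < q := by
          have h1 : s'.card = s.card - 1 := Finset.card_erase_of_mem hws
          have h2 : 1 ≤ s.card := Finset.card_pos.2 ⟨w m, hws⟩
          omega
        have hind := ih s' hs'sub (le_of_lt hcard)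
        have hnotmem : w m ∉ Submodule.span ℝ (s' : Set E') := (hv m).2 s' hs'sub hcard
        have hwm' : w m ∉ (s' : Set E') := by
          simp [hs']
        have := (linearIndepOn_id_insert hwm').2 ⟨hind, hnotmem⟩
        have hset : insert (w m) (s' : Set E') = (s : Set E') := by
          rw [hs', Finset.coe_erase, Set.insert_diff_singleton,
            Set.insert_eq_self.2 (by exact_mod_cast hws)]
        rwa [hset] at this
      · -- w m ∉ s
        have : (s : Set E') ⊆ w '' (Set.Iio m) := by
          intro t ht
          rcases hs ht with h | h
          · exact absurd (h ▸ ht) (by exact_mod_cast hws)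
          · exact h
        exact ih s this hsc
  -- conclude
  intro s hs hsc
  have hchoice : ∀ t ∈ s, ∃ k, w k = t := by
    intro t ht
    obtain ⟨k, hk⟩ := hs ht
    exact ⟨k, hk⟩
  choose! kk hkk using hchoice
  refine inv (s.sup kk + 1) s ?_ hsc
  intro t ht
  have ht' : t ∈ s := by exact_mod_cast ht
  exact ⟨kk t, Nat.lt_succ_of_le (Finset.le_sup ht'), hkk t ht'⟩

end AUX

/-- Covering dimension at most `n`: every open cover has an open refinement in which
each point lies in at most `n + 1` members. -/
def CovDimLE (X : Type) [TopologicalSpace X] (n : ℕ) : Prop :=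
  ∀ 𝒰 : Set (Set X), (∀ U ∈ 𝒰, IsOpen U) → ⋃₀ 𝒰 = Set.univ →
    ∃ 𝒱 : Set (Set X), (∀ V ∈ 𝒱, IsOpen V) ∧ ⋃₀ 𝒱 = Set.univ ∧
      (∀ V ∈ 𝒱, ∃ U ∈ 𝒰, V ⊆ U) ∧
      ∀ x : X, {V ∈ 𝒱 | x ∈ V}.Finite ∧ {V ∈ 𝒱 | x ∈ V}.ncard ≤ n + 1

theorem stmt_4 (n q p : ℕ) (hnq : n < q) (hqp : q ≤ p)
    (X : Type) [TopologicalSpace X] [NormalSpace X] (hdim : CovDimLE X n)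
    (S : Set (EuclideanSpace ℝ (Fin p)))
    (hS : S = {v : EuclideanSpace ℝ (Fin p) | ∀ i : Fin p, p - q ≤ (i : ℕ) → v i = 0})
    (Z : Set (EuclideanSpace ℝ (Fin p))) (hZS : Z ⊆ S)
    (f : X → EuclideanSpace ℝ (Fin p)) (hf : Continuous f)
    (ε : X → ℝ) (hε : Continuous ε) (hεpos : ∀ x, 0 < ε x) :
    ∃ g : X → EuclideanSpace ℝ (Fin p), Continuous g ∧
      ∀ x, ‖f x - g x‖ < ε x ∧ g x ∉ closure Z ∧ g x ∉ S := by
  classical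
  have hq : 0 < q := Nat.pos_of_ne_zero (by omega)
  set π := projQ p q hqp with hπdef
  have hπ : Function.Surjective π := projQ_surj p q hqp
  -- closedness of S
  have hSclosed : IsClosed S := by
    rw [hS]
    have : {v : (EuclideanSpace ℝ (Fin p)) | ∀ i : Fin p, p - q ≤ (i : ℕ) → v i = 0} =
        ⋂ (i : Fin p), ⋂ (_ : p - q ≤ (i : ℕ)), {v : (EuclideanSpace ℝ (Fin p)) | v i = 0} := by
      ext v; simp [Set.mem_iInter]
    rw [this]
    refine isClosed_iInter fun i => isClosed_iInter fun _ => ?_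
    exact isClosed_eq (EuclideanSpace.proj i).continuous continuous_const
  -- dense sequence and ball data
  have : Nonempty (EuclideanSpace ℝ (Fin p)) := ⟨0⟩
  set u : ℕ → (EuclideanSpace ℝ (Fin p)) := TopologicalSpace.denseSeq (EuclideanSpace ℝ (Fin p)) with hu
  have hdense : DenseRange u := TopologicalSpace.denseRange_denseSeq (EuclideanSpace ℝ (Fin p))
  set e : ℕ ≃ ℕ × ℕ := (Denumerable.eqv (ℕ × ℕ)).symm with he
  set c : ℕ → (EuclideanSpace ℝ (Fin p)) := fun k => u (e k).1 with hc
  set r : ℕ → ℝ := fun k => (1 / 2 : ℝ) ^ (e k).2 with hr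
  have hrpos : ∀ k, 0 < r k := fun k => by positivity
  -- the basic cover
  set A : ℕ → Set X := fun k => f ⁻¹' ball (c k) (r k) ∩ {x | 3 * r k < ε x} with hA
  have hAopen : ∀ k, IsOpen (A k) := fun k =>
    (isOpen_ball.preimage hf).inter (isOpen_lt continuous_const hε)
  have hAcover : ∀ x, ∃ k, x ∈ A k := by
    intro x
    obtain ⟨m, hm⟩ := exists_pow_lt_of_lt_one (show (0:ℝ) < ε x / 3 from by
      have := hεpos x; linarith) (show (1/2 : ℝ) < 1 from by norm_num)
    obtain ⟨j, hj⟩ := Metric.denseRange_iff.1 hdense (f x) ((1/2)^m) (by positivity)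
    have hek : e (e.symm (j, m)) = (j, m) := e.apply_symm_apply _
    refine ⟨e.symm (j, m), ?_, ?_⟩
    · show f x ∈ ball (c (e.symm (j, m))) (r (e.symm (j, m)))
      rw [hc, hr]
      simp only [hek]
      exact mem_ball.2 hj
    · show 3 * r (e.symm (j, m)) < ε x
      rw [hr]
      simp only [hek]
      have := hεpos x; linarith
  -- apply covering dimension
  obtain ⟨𝒱, hVopen, hVcover, hVref, hVpt⟩ := hdim (Set.range A)
    (by rintro U ⟨k, rfl⟩; exact hAopen k)
    (by
      apply Set.eq_univ_of_forall
      intro x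
      obtain ⟨k, hk⟩ := hAcover x
      exact ⟨A k, ⟨k, rfl⟩, hk⟩)
  have hkf0 : ∀ V ∈ 𝒱, ∃ k, V ⊆ A k := by
    intro V hV
    obtain ⟨U, ⟨k, rfl⟩, hVU⟩ := hVref V hV
    exact ⟨k, hVU⟩
  choose! kf hkf using hkf0
  set W : ℕ → Set X := fun k => ⋃₀ {V | V ∈ 𝒱 ∧ kf V = k} with hW
  have hWopen : ∀ k, IsOpen (W k) := fun k =>
    isOpen_sUnion fun V hV => hVopen V hV.1
  have hWA : ∀ k, W k ⊆ A k := by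
    rintro k x ⟨V, ⟨hV, rfl⟩, hx⟩
    exact hkf V hV hx
  have hWcover : ⋃ k, W k = Set.univ := by
    apply Set.eq_univ_of_forall
    intro x
    have := hVcover ▸ Set.mem_univ x
    obtain ⟨V, hV, hxV⟩ : ∃ V ∈ 𝒱, x ∈ V := by
      have hx : x ∈ ⋃₀ 𝒱 := by rw [hVcover]; trivial
      exact hx
    exact Set.mem_iUnion.2 ⟨kf V, V, ⟨hV, rfl⟩, hxV⟩
  -- point-finiteness with multiplicity bound
  have hWsub : ∀ x, {k | x ∈ W k} ⊆ kf '' {V ∈ 𝒱 | x ∈ V} := by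
    rintro x k ⟨V, ⟨hV, rfl⟩, hxV⟩
    exact ⟨V, ⟨hV, hxV⟩, rfl⟩
  have hWfin : ∀ x, {k | x ∈ W k}.Finite := fun x =>
    ((hVpt x).1.image kf).subset (hWsub x)
  have hWcard : ∀ x, {k | x ∈ W k}.ncard ≤ n + 1 := by
    intro x
    calc {k | x ∈ W k}.ncard ≤ (kf '' {V ∈ 𝒱 | x ∈ V}).ncard :=
          Set.ncard_le_ncard (hWsub x) ((hVpt x).1.image kf)
      _ ≤ {V ∈ 𝒱 | x ∈ V}.ncard := Set.ncard_image_le (hVpt x).1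
      _ ≤ n + 1 := (hVpt x).2
  -- shrink the cover
  obtain ⟨W', hW'U, hW'open, hW'cl⟩ := exists_iUnion_eq_closure_subset hWopen hWfin hWcover
  -- Urysohn functions
  have hury : ∀ k, ∃ φ : C(X, ℝ), Set.EqOn φ 0 (W k)ᶜ ∧ Set.EqOn φ 1 (closure (W' k)) ∧
      ∀ x, φ x ∈ Set.Icc (0:ℝ) 1 := by
    intro k
    refine exists_continuous_zero_one_of_isClosed (isClosed_compl_iff.2 (hWopen k))
      isClosed_closure ?_
    exact Set.disjoint_left.2 fun x hx hx2 => hx (hW'cl k hx2)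
  choose φ hφ0 hφ1 hφ01 using hury
  -- general position points
  obtain ⟨v, hvball, hGP⟩ := gp_seq hq π hπ c r hrpos
  -- coefficients
  set a : ℕ → ℝ := fun k => (1/2:ℝ)^k / (1 + ‖v k‖) with ha
  have hapos : ∀ k, 0 < a k := fun k => by
    simp only [ha]
    positivity
  have hale : ∀ k, a k ≤ (1/2:ℝ)^k := fun k => by
    simp only [ha]
    have h1 : (0:ℝ) < 1 + ‖v k‖ := by positivity
    calc (1/2:ℝ)^k / (1 + ‖v k‖) ≤ (1/2:ℝ)^k / 1 := by
          apply div_le_div_of_nonneg_left (by positivity) (by norm_num) (by linarith [norm_nonneg (v k)])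
      _ = (1/2:ℝ)^k := by ring
  have hφnonneg : ∀ k x, 0 ≤ φ k x := fun k x => (hφ01 k x).1
  have hφle1 : ∀ k x, φ k x ≤ 1 := fun k x => (hφ01 k x).2
  have hφzero : ∀ k x, x ∉ W k → φ k x = 0 := fun k x hx => hφ0 k hx
  -- the sums
  set sF : X → ℝ := fun x => ∑' k, a k * φ k x with hsF
  set NF : X → (EuclideanSpace ℝ (Fin p)) := fun x => ∑' k, (a k * φ k x) • v k with hNF
  have hsummand_bound : ∀ k x, ‖a k * φ k x‖ ≤ (1/2:ℝ)^k := by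
    intro k x
    rw [Real.norm_eq_abs, abs_of_nonneg (mul_nonneg (hapos k).le (hφnonneg k x))]
    calc a k * φ k x ≤ a k * 1 := by
          apply mul_le_mul_of_nonneg_left (hφle1 k x) (hapos k).le
      _ = a k := mul_one _
      _ ≤ (1/2:ℝ)^k := hale k
  have hNbound : ∀ k x, ‖(a k * φ k x) • v k‖ ≤ (1/2:ℝ)^k := by
    intro k x
    rw [norm_smul, Real.norm_eq_abs, abs_of_nonneg (mul_nonneg (hapos k).le (hφnonneg k x))]
    simp only [ha]
    have h1 : (0:ℝ) < 1 + ‖v k‖ := by positivity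
    calc (1/2:ℝ)^k / (1 + ‖v k‖) * φ k x * ‖v k‖ ≤ (1/2:ℝ)^k / (1 + ‖v k‖) * 1 * ‖v k‖ := by
          apply mul_le_mul_of_nonneg_right
            (mul_le_mul_of_nonneg_left (hφle1 k x) (by positivity)) (norm_nonneg _)
      _ = (1/2:ℝ)^k * (‖v k‖ / (1 + ‖v k‖)) := by ring
      _ ≤ (1/2:ℝ)^k * 1 := by
          apply mul_le_mul_of_nonneg_left _ (by positivity)
          rw [div_le_one h1]; linarith
      _ = (1/2:ℝ)^k := mul_one _
  have hgeo : Summable (fun k : ℕ => (1/2:ℝ)^k) := summable_geometric_two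
  have hsFcont : Continuous sF := by
    refine continuous_tsum (fun k => continuous_const.mul (φ k).continuous) hgeo ?_
    intro k x; exact hsummand_bound k x
  have hNFcont : Continuous NF := by
    refine continuous_tsum (fun k => (continuous_const.mul (φ k).continuous).smul continuous_const)
      hgeo ?_
    intro k x; exact hNbound k x
  -- finite support
  set K : X → Finset ℕ := fun x => (hWfin x).toFinset with hK
  have hKmem : ∀ x k, k ∈ K x ↔ x ∈ W k := by
    intro x k; rw [hK]; simp [Set.Finite.mem_toFinset]
  have hKcard : ∀ x, (K x).card ≤ n + 1 := by
    intro x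
    have := hWcard x
    rwa [Set.ncard_eq_toFinset_card _ (hWfin x)] at this
  have hcoeff_zero : ∀ x k, k ∉ K x → a k * φ k x = 0 := by
    intro x k hk
    rw [hφzero k x (fun hx => hk ((hKmem x k).2 hx)), mul_zero]
  have hsF_eq : ∀ x, sF x = ∑ k ∈ K x, a k * φ k x := by
    intro x
    exact tsum_eq_sum (fun k hk => hcoeff_zero x k hk)
  have hNF_eq : ∀ x, NF x = ∑ k ∈ K x, (a k * φ k x) • v k := by
    intro x
    exact tsum_eq_sum (fun k hk => by rw [hcoeff_zero x k hk, zero_smul])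
  have hsF_pos : ∀ x, 0 < sF x := by
    intro x
    obtain ⟨k0, hk0⟩ : ∃ k0, x ∈ W' k0 := Set.mem_iUnion.1 (hW'U ▸ Set.mem_univ x)
    have hk0K : k0 ∈ K x := (hKmem x k0).2 (hW'cl k0 (subset_closure hk0))
    have hφ1k0 : φ k0 x = 1 := hφ1 k0 (subset_closure hk0)
    rw [hsF_eq x]
    have h1 : a k0 * φ k0 x ≤ ∑ k ∈ K x, a k * φ k x :=
      Finset.single_le_sum (f := fun k => a k * φ k x)
        (fun k _ => mul_nonneg (hapos k).le (hφnonneg k x)) hk0K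
    rw [hφ1k0, mul_one] at h1
    exact lt_of_lt_of_le (hapos k0) h1
  set g : X → EuclideanSpace ℝ (Fin p) := fun x => (sF x)⁻¹ • NF x with hg
  have hgcont : Continuous g := (hsFcont.inv₀ (fun x => (hsF_pos x).ne')).smul hNFcont
  have hdist : ∀ x k, k ∈ K x → ‖f x - v k‖ ≤ 2 * r k ∧ 3 * r k < ε x := by
    intro x k hk
    have hxA : x ∈ A k := hWA k ((hKmem x k).1 hk)
    obtain ⟨hx1, hx2⟩ := hxA
    refine ⟨?_, hx2⟩
    have h1 : dist (f x) (c k) < r k := mem_ball.1 hx1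
    have h2 : dist (v k) (c k) < r k := mem_ball.1 (hvball k)
    calc ‖f x - v k‖ = dist (f x) (v k) := (dist_eq_norm _ _).symm
      _ ≤ dist (f x) (c k) + dist (c k) (v k) := dist_triangle _ _ _
      _ = dist (f x) (c k) + dist (v k) (c k) := by rw [dist_comm (c k)]
      _ ≤ 2 * r k := by linarith
  have hest : ∀ x, ‖f x - g x‖ < ε x := by
    intro x
    have hsne : sF x ≠ 0 := (hsF_pos x).ne'
    have key : f x - g x = (sF x)⁻¹ • (∑ k ∈ K x, (a k * φ k x) • (f x - v k)) := by
      rw [hg]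
      have h1 : (∑ k ∈ K x, (a k * φ k x) • (f x - v k))
          = (sF x) • f x - NF x := by
        rw [hsF_eq x, hNF_eq x, Finset.sum_smul, ← Finset.sum_sub_distrib]
        exact Finset.sum_congr rfl fun k _ => smul_sub _ _ _
      rw [h1, smul_sub, smul_smul, inv_mul_cancel₀ hsne, one_smul]
    rw [key]
    have hb : ‖∑ k ∈ K x, (a k * φ k x) • (f x - v k)‖ ≤ (sF x) * ((2/3) * ε x) := by
      calc ‖∑ k ∈ K x, (a k * φ k x) • (f x - v k)‖
          ≤ ∑ k ∈ K x, ‖(a k * φ k x) • (f x - v k)‖ := norm_sum_le _ _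
        _ ≤ ∑ k ∈ K x, (a k * φ k x) * ((2/3) * ε x) := by
            refine Finset.sum_le_sum fun k hk => ?_
            rw [norm_smul, Real.norm_eq_abs,
              abs_of_nonneg (mul_nonneg (hapos k).le (hφnonneg k x))]
            refine mul_le_mul_of_nonneg_left ?_ (mul_nonneg (hapos k).le (hφnonneg k x))
            obtain ⟨hd1, hd2⟩ := hdist x k hk
            linarith
        _ = (sF x) * ((2/3) * ε x) := by rw [hsF_eq x, ← Finset.sum_mul]
    calc ‖(sF x)⁻¹ • (∑ k ∈ K x, (a k * φ k x) • (f x - v k))‖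
        = (sF x)⁻¹ * ‖∑ k ∈ K x, (a k * φ k x) • (f x - v k)‖ := by
          rw [norm_smul, Real.norm_eq_abs, abs_of_nonneg (inv_nonneg.2 (hsF_pos x).le)]
      _ ≤ (sF x)⁻¹ * ((sF x) * ((2/3) * ε x)) :=
          mul_le_mul_of_nonneg_left hb (inv_nonneg.2 (hsF_pos x).le)
      _ = (2/3) * ε x := by field_simp
      _ < ε x := by have := hεpos x; linarith
  have hπg : ∀ x, π (g x) ≠ 0 := by
    intro x hzero
    have hsne : sF x ≠ 0 := (hsF_pos x).ne'
    have hπN : π (NF x) = ∑ k ∈ K x, (a k * φ k x) • π (v k) := by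
      rw [hNF_eq x, map_sum]
      exact Finset.sum_congr rfl fun k _ => _root_.map_smul π _ _
    have hM : (∑ k ∈ K x, (a k * φ k x) • π (v k)) = 0 := by
      have h2 : π (g x) = (sF x)⁻¹ • π (NF x) := by rw [hg, _root_.map_smul]
      rw [h2] at hzero
      rw [← hπN]
      rcases smul_eq_zero.1 hzero with h | h
      · exact absurd (inv_eq_zero.1 h) hsne
      · exact h
    set D : Finset (EuclideanSpace ℝ (Fin q)) := (K x).image (fun k => π (v k)) with hD
    set b : EuclideanSpace ℝ (Fin q) → ℝ :=
      fun d => ∑ k ∈ (K x).filter (fun k => π (v k) = d), (a k * φ k x) with hbdef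
    have hfib : ∑ d ∈ D, b d • d = ∑ k ∈ K x, (a k * φ k x) • π (v k) := by
      rw [← Finset.sum_fiberwise_of_maps_to (t := D) (g := fun k => π (v k))
        (fun k hk => Finset.mem_image_of_mem _ hk) (fun k => (a k * φ k x) • π (v k))]
      refine Finset.sum_congr rfl fun d _ => ?_
      rw [hbdef, Finset.sum_smul]
      refine Finset.sum_congr rfl fun k hk => ?_
      rw [(Finset.mem_filter.1 hk).2]
    have hfib2 : ∑ d ∈ D, b d = sF x := by
      rw [hsF_eq x]
      exact Finset.sum_fiberwise_of_maps_to (t := D) (g := fun k => π (v k))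
        (fun k hk => Finset.mem_image_of_mem _ hk) _
    have hDcard : D.card ≤ q := by
      calc D.card ≤ (K x).card := Finset.card_image_le
        _ ≤ n + 1 := hKcard x
        _ ≤ q := hnq
    have hDsub : (D : Set (EuclideanSpace ℝ (Fin q))) ⊆ Set.range (fun k => π (v k)) := by
      intro d hd
      obtain ⟨k, _, rfl⟩ := Finset.mem_image.1 (by exact_mod_cast hd)
      exact ⟨k, rfl⟩
    have hLI := hGP D hDsub hDcard
    have hzero' : ∀ d ∈ D, b d = 0 := by
      have hsum0 : ∑ d ∈ D, b d • d = 0 := by rw [hfib, hM]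
      have h3 := linearIndependent_iff'.1 hLI Finset.univ (fun i => b i.1)
        (by
          rw [← hsum0, ← Finset.sum_coe_sort D (fun d => b d • d)]
          rfl)
      intro d hd
      exact h3 ⟨d, by exact_mod_cast hd⟩ (Finset.mem_univ _)
    have h4 : sF x = 0 := by
      rw [← hfib2]
      exact Finset.sum_eq_zero hzero'
    exact hsne h4
  have hgS : ∀ x, g x ∉ S := by
    intro x hxS
    apply hπg x
    ext j
    exact (hS ▸ hxS) ⟨p - q + j.1, by omega⟩ (Nat.le_add_right _ _)
  exact ⟨g, hgcont, fun x =>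
    ⟨hest x, fun hcl => hgS x (closure_minimal hZS hSclosed hcl), hgS x⟩⟩
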